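/- (Passivity degradation under time discretization and quantization.) Let τ, γ, μ, ε, L, θ > 0, m ∈ ℕ with m ≥ 1, ν, ρ ∈ ℝ, λ₂, λ₃, λ₄, λ₅ > 0, and k ∈ ℕ. Let V : ℝⁿ → ℝ, x : ℝ → ℝⁿ, y : ℝ → ℝᵐ with y continuously differentiable on [kτ, (k+1)τ], let û_k, ŷ_k ∈ ℝᵐ and x̂_k, x̂_{k+1} ∈ ℝⁿ. Assume: (a) the input u is constant on [kτ, (k+1)τ) with value û_k; (b) the gain inequality ∫_{kτ}^{t} ‖ẏ(s)‖₂² ds ≤ γ² (t − kτ) ‖û_k‖₂² holds for all t ∈ [kτ, (k+1)τ]; (c) V(x((k+1)τ)) − V(x(kτ)) ≤ ∫_{kτ}^{(k+1)τ} ( û_kᵀy(t) − ν‖û_k‖₂² − ρ‖y(t)‖₂² ) dt; (d) ‖ŷ_k − y(kτ)‖₂ ≤ (√m)μ/2; (e) ‖x̂_k − x(kτ)‖_∞ ≤ ε and ‖x̂_{k+1} − x((k+1)τ)‖_∞ ≤ ε; (f) |V(a) − V(b)| ≤ L‖a − b‖_∞^θ whenever ‖a − b‖_∞ ≤ ε.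 Then V(x̂_{k+1}) − V(x̂_k) ≤ τ û_kᵀ ŷ_k − τ ν″ ‖û_k‖₂² − τ ρ″ ‖ŷ_k‖₂² + α, where ν″ = ν − τγ − λ₂(√m)μ/4 − |ρ|τγ(τγ + (√m)μλ₃ + λ₄), ρ″ = ρ − |ρ|(τγ/λ₄ + (√m)μλ₅), and α = τ(√m)μ/(4λ₂) + τμ|ρ|(τγ√m/(4λ₃) + √m/(4λ₅) + mμ/4) + 2Lε^θ. -/

import Mathlib

set_option maxHeartbeats 4000000

open MeasureTheory

open scoped RealInnerProductSpace

open MeasureTheory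

lemma cs_aux {a t : ℝ} (h : a ≤ t) {g : ℝ → ℝ} (hg : ContinuousOn g (Set.Icc a t))
    (hgnn : ∀ s, 0 ≤ g s) :
    (∫ s in a..t, g s) ^ 2 ≤ (t - a) * ∫ s in a..t, g s ^ 2 := by
  have hfin : IsFiniteMeasure (volume.restrict (Set.Ioc a t)) := by
    constructor
    rw [Measure.restrict_apply_univ, Real.volume_Ioc]
    exact ENNReal.ofReal_lt_top
  obtain ⟨C, hC⟩ := (isCompact_Icc : IsCompact (Set.Icc a t)).exists_bound_of_continuousOn hg
  have haesm : AEStronglyMeasurable g (volume.restrict (Set.Ioc a t)) :=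
    (hg.mono Set.Ioc_subset_Icc_self).aestronglyMeasurable measurableSet_Ioc
  have hmem : MemLp g (ENNReal.ofReal 2) (volume.restrict (Set.Ioc a t)) := by
    apply MemLp.of_bound haesm C
    filter_upwards [ae_restrict_mem measurableSet_Ioc] with s hs
    exact hC s (Set.Ioc_subset_Icc_self hs)
  have hmem1 : MemLp (fun _ : ℝ => (1 : ℝ)) (ENNReal.ofReal 2)
      (volume.restrict (Set.Ioc a t)) := memLp_const 1
  have hpq : Real.HolderConjugate 2 2 := Real.HolderConjugate.two_two
  have H := MeasureTheory.integral_mul_le_Lp_mul_Lq_of_nonneg hpq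
    (f := fun _ => (1 : ℝ)) (g := g)
    (Filter.Eventually.of_forall fun _ => zero_le_one)
    (Filter.Eventually.of_forall fun s => hgnn s) hmem1 hmem
  simp only [one_mul, Real.one_rpow, integral_const, Measure.restrict_apply_univ,
    Real.volume_Ioc, smul_eq_mul, mul_one] at H
  rw [Measure.real, Measure.restrict_apply_univ, Real.volume_Ioc,
    ENNReal.toReal_ofReal (by linarith)] at H
  have hg2 : ∀ s, g s ^ (2 : ℝ) = g s ^ 2 := fun s => by
    rw [show (2 : ℝ) = ((2 : ℕ) : ℝ) by norm_num, Real.rpow_natCast]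
  simp only [hg2] at H
  rw [intervalIntegral.integral_of_le h, intervalIntegral.integral_of_le h]
  have h1 : 0 ≤ ∫ s in Set.Ioc a t, g s :=
    integral_nonneg fun s => hgnn s
  have h2 : 0 ≤ ∫ s in Set.Ioc a t, g s ^ 2 :=
    integral_nonneg fun s => sq_nonneg _
  calc (∫ s in Set.Ioc a t, g s) ^ 2
      ≤ ((t - a) ^ (1/(2:ℝ)) * (∫ s in Set.Ioc a t, g s ^ 2) ^ (1/(2:ℝ))) ^ 2 := by
        apply pow_le_pow_left₀ h1 H
    _ = (t - a) * ∫ s in Set.Ioc a t, g s ^ 2 := by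
        rw [mul_pow, ← Real.rpow_natCast ((t-a) ^ (1/(2:ℝ))) 2,
          ← Real.rpow_natCast ((∫ s in Set.Ioc a t, g s ^ 2) ^ (1/(2:ℝ))) 2,
          ← Real.rpow_mul (by linarith), ← Real.rpow_mul h2]
        norm_num

lemma young_comb {U Y W M G A l2 l3 l4 l5 : ℝ} (hU : 0 ≤ U) (hY : 0 ≤ Y) (hW : 0 ≤ W)
    (hM : 0 < M) (hG : 0 < G) (hA : 0 ≤ A) (h2 : 0 < l2) (h3 : 0 < l3) (h4 : 0 < l4)
    (h5 : 0 < l5) (hWb : W ≤ M/2 + G*U) :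
    U*W + 2*A*Y*W + A*W^2 ≤ (G + l2*M/4 + A*G*(G + M*l3 + l4))*U^2 + A*(G/l4 + M*l5)*Y^2
      + (M/(4*l2) + A*M*G/(4*l3) + A*M/(4*l5) + A*M^2/4) := by
  have e1 : U*W ≤ U*M/2 + G*U^2 := by nlinarith [mul_le_mul_of_nonneg_left hWb hU]
  have y1 : U*M/2 ≤ l2*M/4*U^2 + M/(4*l2) := by
    have h : l2*M/4*U^2 + M/(4*l2) - U*M/2 = (M/(4*l2))*(l2*U-1)^2 := by field_simp; ring
    nlinarith [mul_nonneg (by positivity : (0:ℝ) ≤ M/(4*l2)) (sq_nonneg (l2*U - 1)), h]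
  have e2 : 2*A*Y*W ≤ A*M*Y + 2*A*G*Y*U := by
    nlinarith [mul_le_mul_of_nonneg_left hWb (by positivity : (0:ℝ) ≤ 2*A*Y)]
  have y2 : A*M*Y ≤ A*M*l5*Y^2 + A*M/(4*l5) := by
    have h : A*M*l5*Y^2 + A*M/(4*l5) - A*M*Y = (A*M/(4*l5))*(2*l5*Y-1)^2 := by
      field_simp; ring
    nlinarith [mul_nonneg (by positivity : (0:ℝ) ≤ A*M/(4*l5)) (sq_nonneg (2*l5*Y - 1)), h]
  have y3 : 2*A*G*Y*U ≤ A*G/l4*Y^2 + A*G*l4*U^2 := by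
    have h : A*G/l4*Y^2 + A*G*l4*U^2 - 2*A*G*Y*U = (A*G/l4)*(Y - l4*U)^2 := by
      field_simp; ring
    nlinarith [mul_nonneg (by positivity : (0:ℝ) ≤ A*G/l4) (sq_nonneg (Y - l4*U)), h]
  have e3 : A*W^2 ≤ A*(M/2 + G*U)^2 :=
    mul_le_mul_of_nonneg_left (pow_le_pow_left₀ hW hWb 2) hA
  have y5 : A*M*G*U ≤ A*M*G*l3*U^2 + A*M*G/(4*l3) := by
    have h : A*M*G*l3*U^2 + A*M*G/(4*l3) - A*M*G*U = (A*M*G/(4*l3))*(2*l3*U-1)^2 := by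
      field_simp; ring
    nlinarith [mul_nonneg (by positivity : (0:ℝ) ≤ A*M*G/(4*l3)) (sq_nonneg (2*l3*U - 1)), h]
  rw [show A*(M/2 + G*U)^2 = A*M^2/4 + A*M*G*U + A*G^2*U^2 by ring] at e3
  ring_nf at e1 y1 e2 y2 y3 e3 y5 ⊢
  linarith [e1, y1, e2, y2, y3, e3, y5]

/-- Passivity degradation under time discretization and quantization: the symbolic
(approximately bisimilar) trajectory satisfies a discrete-time quasi-passivity
inequality with degraded indices `ν″, ρ″` and bias `α`. The state space carries
the sup (ℓ∞) norm, the input/output space the Euclidean (ℓ₂) norm. -/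
theorem stmt_10 {n m : ℕ} (τ γ μ ε L θ : ℝ) (hτ : 0 < τ) (hγ : 0 < γ) (hμ : 0 < μ)
    (hε : 0 < ε) (hL : 0 < L) (hθ : 0 < θ) (hm : 1 ≤ m) (ν ρ : ℝ)
    (lam₂ lam₃ lam₄ lam₅ : ℝ) (hlam₂ : 0 < lam₂) (hlam₃ : 0 < lam₃)
    (hlam₄ : 0 < lam₄) (hlam₅ : 0 < lam₅) (k : ℕ)
    (V : (Fin n → ℝ) → ℝ) (x : ℝ → (Fin n → ℝ))
    (u y y' : ℝ → EuclideanSpace ℝ (Fin m))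
    (uhat yhat : EuclideanSpace ℝ (Fin m)) (xhat xhat' : Fin n → ℝ)
    (hderiv : ∀ t ∈ Set.Icc ((k : ℝ) * τ) (((k : ℝ) + 1) * τ), HasDerivAt y (y' t) t)
    (hy'cont : ContinuousOn y' (Set.Icc ((k : ℝ) * τ) (((k : ℝ) + 1) * τ)))
    -- (a) the input is constant on the sampling interval with value `uhat`
    (hu : ∀ t ∈ Set.Ico ((k : ℝ) * τ) (((k : ℝ) + 1) * τ), u t = uhat)
    -- (b) gain inequality
    (hgain : ∀ t ∈ Set.Icc ((k : ℝ) * τ) (((k : ℝ) + 1) * τ),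
      (∫ s in ((k : ℝ) * τ)..t, ‖y' s‖ ^ 2) ≤ γ ^ 2 * (t - (k : ℝ) * τ) * ‖uhat‖ ^ 2)
    -- (c) continuous-time dissipation inequality
    (hdiss : V (x (((k : ℝ) + 1) * τ)) - V (x ((k : ℝ) * τ)) ≤
      ∫ t in ((k : ℝ) * τ)..(((k : ℝ) + 1) * τ),
        (⟪uhat, y t⟫ - ν * ‖uhat‖ ^ 2 - ρ * ‖y t‖ ^ 2))
    -- (d) output quantization error
    (hy : ‖yhat - y ((k : ℝ) * τ)‖ ≤ Real.sqrt m * μ / 2)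
    -- (e) state abstraction error (ℓ∞ norm)
    (hx : ‖xhat - x ((k : ℝ) * τ)‖ ≤ ε) (hx' : ‖xhat' - x (((k : ℝ) + 1) * τ)‖ ≤ ε)
    -- (f) Hölder continuity of V at scale ε (ℓ∞ norm)
    (hV : ∀ a b : Fin n → ℝ, ‖a - b‖ ≤ ε → |V a - V b| ≤ L * ‖a - b‖ ^ θ) :
    V xhat' - V xhat ≤
      τ * ⟪uhat, yhat⟫
        - τ * (ν - τ * γ - lam₂ * Real.sqrt m * μ / 4
            - |ρ| * τ * γ * (τ * γ + Real.sqrt m * μ * lam₃ + lam₄)) * ‖uhat‖ ^ 2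
        - τ * (ρ - |ρ| * (τ * γ / lam₄ + Real.sqrt m * μ * lam₅)) * ‖yhat‖ ^ 2
        + (τ * Real.sqrt m * μ / (4 * lam₂)
            + τ * μ * |ρ| * (τ * γ * Real.sqrt m / (4 * lam₃)
                + Real.sqrt m / (4 * lam₅) + m * μ / 4)
            + 2 * L * ε ^ θ) := by
  set a := (k : ℝ) * τ with ha
  set b := ((k : ℝ) + 1) * τ with hb
  have hba : b - a = τ := by rw [ha, hb]; ring
  have hab : a ≤ b := by linarith
  -- basic positivity
  have hsm : (0 : ℝ) < Real.sqrt m :=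
    Real.sqrt_pos.mpr (by exact_mod_cast Nat.lt_of_lt_of_le Nat.zero_lt_one hm)
  set M : ℝ := Real.sqrt m * μ with hM
  have hMpos : 0 < M := mul_pos hsm hμ
  have hMsq : M ^ 2 = (m : ℝ) * μ ^ 2 := by
    rw [hM, mul_pow, Real.sq_sqrt (Nat.cast_nonneg m)]
  -- continuity of y on [a, b]
  have hycont : ContinuousOn y (Set.Icc a b) := fun t ht =>
    (hderiv t ht).continuousAt.continuousWithinAt
  -- key estimate: ‖y t - y a‖ ≤ γ (t - a) ‖uhat‖
  have keyE : ∀ t ∈ Set.Icc a b, ‖y t - y a‖ ≤ γ * (t - a) * ‖uhat‖ := by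
    intro t ht
    obtain ⟨ht1, ht2⟩ := ht
    have hsub : Set.Icc a t ⊆ Set.Icc a b := Set.Icc_subset_Icc le_rfl ht2
    have hint : IntervalIntegrable y' volume a t :=
      (hy'cont.mono hsub).intervalIntegrable_of_Icc ht1
    have hftc : ∫ s in a..t, y' s = y t - y a :=
      intervalIntegral.integral_eq_sub_of_hasDerivAt
        (fun s hs => hderiv s (hsub (by rwa [Set.uIcc_of_le ht1] at hs))) hint
    rw [← hftc]
    have h1 : ‖∫ s in a..t, y' s‖ ≤ ∫ s in a..t, ‖y' s‖ :=
      intervalIntegral.norm_integral_le_integral_norm ht1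
    have h2 : (∫ s in a..t, ‖y' s‖) ^ 2 ≤ (t - a) * ∫ s in a..t, ‖y' s‖ ^ 2 :=
      cs_aux ht1 ((hy'cont.mono hsub).norm) (fun s => norm_nonneg _)
    have h3 : (t - a) * ∫ s in a..t, ‖y' s‖ ^ 2 ≤
        (t - a) * (γ ^ 2 * (t - a) * ‖uhat‖ ^ 2) :=
      mul_le_mul_of_nonneg_left (hgain t ⟨ht1, ht2⟩) (by linarith)
    have h4 : (∫ s in a..t, ‖y' s‖) ^ 2 ≤ (γ * (t - a) * ‖uhat‖) ^ 2 := by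
      calc (∫ s in a..t, ‖y' s‖) ^ 2 ≤ (t - a) * (γ ^ 2 * (t - a) * ‖uhat‖ ^ 2) :=
            h2.trans h3
        _ = (γ * (t - a) * ‖uhat‖) ^ 2 := by ring
    have h5 : (0 : ℝ) ≤ ∫ s in a..t, ‖y' s‖ :=
      intervalIntegral.integral_nonneg ht1 (fun s _ => norm_nonneg _)
    have h6 : (0 : ℝ) ≤ γ * (t - a) * ‖uhat‖ :=
      mul_nonneg (mul_nonneg hγ.le (by linarith)) (norm_nonneg _)
    calc ‖∫ s in a..t, y' s‖ ≤ ∫ s in a..t, ‖y' s‖ := h1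
      _ = Real.sqrt ((∫ s in a..t, ‖y' s‖) ^ 2) := (Real.sqrt_sq h5).symm
      _ ≤ Real.sqrt ((γ * (t - a) * ‖uhat‖) ^ 2) := Real.sqrt_le_sqrt h4
      _ = γ * (t - a) * ‖uhat‖ := Real.sqrt_sq h6
  -- the uniform bound for the integrand
  set C : ℝ := ⟪uhat, yhat⟫
      - (ν - τ * γ - lam₂ * M / 4 - |ρ| * τ * γ * (τ * γ + M * lam₃ + lam₄)) * ‖uhat‖ ^ 2
      - (ρ - |ρ| * (τ * γ / lam₄ + M * lam₅)) * ‖yhat‖ ^ 2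
      + (M / (4 * lam₂) + |ρ| * M * (τ * γ) / (4 * lam₃) + |ρ| * M / (4 * lam₅)
          + |ρ| * M ^ 2 / 4) with hC
  have hpw : ∀ t ∈ Set.Icc a b,
      ⟪uhat, y t⟫ - ν * ‖uhat‖ ^ 2 - ρ * ‖y t‖ ^ 2 ≤ C := by
    intro t ht
    set U : ℝ := ‖uhat‖
    set Y : ℝ := ‖yhat‖
    set W : ℝ := ‖y t - yhat‖ with hWdef
    have hU : 0 ≤ U := norm_nonneg _
    have hYn : 0 ≤ Y := norm_nonneg _
    have hWn : 0 ≤ W := norm_nonneg _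
    have hWb : W ≤ M / 2 + (τ * γ) * U := by
      have h1 : W ≤ ‖y t - y a‖ + ‖y a - yhat‖ := by
        rw [hWdef, show y t - yhat = (y t - y a) + (y a - yhat) by abel]
        exact norm_add_le _ _
      have h2 : ‖y a - yhat‖ = ‖yhat - y a‖ := norm_sub_rev _ _
      have h3 : ‖y t - y a‖ ≤ γ * (t - a) * U := keyE t ht
      have h4 : γ * (t - a) * U ≤ τ * γ * U := by
        have : t - a ≤ τ := by
          have := ht.2; rw [hb] at this; simp only [ha]; nlinarith
        nlinarith [mul_nonneg hγ.le hU]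
      calc W ≤ ‖y t - y a‖ + ‖yhat - y a‖ := by rw [← h2]; exact h1
        _ ≤ γ * (t - a) * U + M / 2 := add_le_add h3 (by rw [hM]; exact hy)
        _ ≤ M / 2 + (τ * γ) * U := by linarith
    have hinner : ⟪uhat, y t⟫ ≤ ⟪uhat, yhat⟫ + U * W := by
      have h1 : ⟪uhat, y t⟫ = ⟪uhat, yhat⟫ + ⟪uhat, y t - yhat⟫ := by
        rw [inner_sub_right]; ring
      rw [h1]
      have := real_inner_le_norm uhat (y t - yhat)
      linarith
    have hnorm : ‖y t‖ ^ 2 = Y ^ 2 + 2 * ⟪yhat, y t - yhat⟫ + W ^ 2 := by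
      have h0 := norm_add_sq_real yhat (y t - yhat)
      have h1 : yhat + (y t - yhat) = y t := by abel
      rw [h1] at h0
      exact h0
    have hinner2 : |⟪yhat, y t - yhat⟫| ≤ Y * W := abs_real_inner_le_norm _ _
    have hyoung := young_comb hU hYn hWn hMpos (mul_pos hτ hγ) (abs_nonneg ρ)
      hlam₂ hlam₃ hlam₄ hlam₅ hWb
    have habs1 : -(2 * ρ * ⟪yhat, y t - yhat⟫) ≤ 2 * |ρ| * Y * W := by
      have : |2 * ρ * ⟪yhat, y t - yhat⟫| ≤ 2 * |ρ| * (Y * W) := by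
        rw [abs_mul, abs_mul, abs_two]
        exact mul_le_mul_of_nonneg_left hinner2 (by positivity)
      have := neg_abs_le (2 * ρ * ⟪yhat, y t - yhat⟫)
      linarith [abs_nonneg (2 * ρ * ⟪yhat, y t - yhat⟫),
        (abs_le.mp (le_refl |2 * ρ * ⟪yhat, y t - yhat⟫|)).1]
    have habs2 : -(ρ * W ^ 2) ≤ |ρ| * W ^ 2 := by
      have := neg_abs_le ρ
      nlinarith [sq_nonneg W, abs_nonneg ρ]
    rw [hC, hnorm]
    ring_nf at hyoung habs1 habs2 hinner ⊢
    linarith [hyoung, habs1, habs2, hinner]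
  -- integrate the pointwise bound
  have hcont : ContinuousOn
      (fun t => ⟪uhat, y t⟫ - ν * ‖uhat‖ ^ 2 - ρ * ‖y t‖ ^ 2) (Set.Icc a b) := by
    apply ContinuousOn.sub
    apply ContinuousOn.sub
    · exact continuousOn_const.inner hycont
    · exact continuousOn_const
    · exact (continuousOn_const.mul ((hycont.norm).pow 2))
  have hint : IntervalIntegrable
      (fun t => ⟪uhat, y t⟫ - ν * ‖uhat‖ ^ 2 - ρ * ‖y t‖ ^ 2) volume a b :=
    hcont.intervalIntegrable_of_Icc hab
  have hIle : (∫ t in a..b, (⟪uhat, y t⟫ - ν * ‖uhat‖ ^ 2 - ρ * ‖y t‖ ^ 2)) ≤ τ * C := by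
    calc (∫ t in a..b, (⟪uhat, y t⟫ - ν * ‖uhat‖ ^ 2 - ρ * ‖y t‖ ^ 2))
        ≤ ∫ _ in a..b, C :=
          intervalIntegral.integral_mono_on hab hint intervalIntegrable_const hpw
      _ = (b - a) * C := by rw [intervalIntegral.integral_const, smul_eq_mul]
      _ = τ * C := by rw [hba]
  -- Hölder-continuity steps
  have hH1 : |V xhat' - V (x b)| ≤ L * ε ^ θ := by
    calc |V xhat' - V (x b)| ≤ L * ‖xhat' - x b‖ ^ θ := hV _ _ hx'
      _ ≤ L * ε ^ θ := by
          exact mul_le_mul_of_nonneg_left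
            (Real.rpow_le_rpow (norm_nonneg _) hx' hθ.le) hL.le
  have hH2 : |V xhat - V (x a)| ≤ L * ε ^ θ := by
    calc |V xhat - V (x a)| ≤ L * ‖xhat - x a‖ ^ θ := hV _ _ hx
      _ ≤ L * ε ^ θ := by
          exact mul_le_mul_of_nonneg_left
            (Real.rpow_le_rpow (norm_nonneg _) hx hθ.le) hL.le
  have h1 := (abs_le.mp hH1).2
  have h2 := (abs_le.mp hH2).1
  -- assemble
  have hfinal : V xhat' - V xhat ≤ τ * C + 2 * L * ε ^ θ := by
    have := hdiss.trans hIle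
    have e1 : V xhat' - V (x b) ≤ L * ε ^ θ := h1
    have e2 : -(L * ε ^ θ) ≤ V xhat - V (x a) := h2
    linarith
  have hs : Real.sqrt m ^ 2 = (m : ℝ) := Real.sq_sqrt (Nat.cast_nonneg m)
  have hCeq : τ * C + 2 * L * ε ^ θ =
      τ * ⟪uhat, yhat⟫
        - τ * (ν - τ * γ - lam₂ * Real.sqrt m * μ / 4
            - |ρ| * τ * γ * (τ * γ + Real.sqrt m * μ * lam₃ + lam₄)) * ‖uhat‖ ^ 2
        - τ * (ρ - |ρ| * (τ * γ / lam₄ + Real.sqrt m * μ * lam₅)) * ‖yhat‖ ^ 2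
        + (τ * Real.sqrt m * μ / (4 * lam₂)
            + τ * μ * |ρ| * (τ * γ * Real.sqrt m / (4 * lam₃)
                + Real.sqrt m / (4 * lam₅) + m * μ / 4)
            + 2 * L * ε ^ θ) := by
    rw [hC, hM]
    linear_combination (τ * μ ^ 2 * |ρ| / 4) * hs
  have hfinal2 := hfinal.trans_eq hCeq
  rw [hM]
  exact hfinal2
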